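/- For every extended LTL formula φ there exists an equivalent extended LTL formula φ' in 1-form such that ‖φ'‖ ≤ 4^{2‖φ‖} · ‖φ‖. Moreover, for every subformula GF ψ of φ' the formula ψ is a subformula of φ, and every FG-subformula of φ' is also a subformula of φ. -/

import Mathlib

namespace ExtLTL

/-- Extended LTL formulas, with the limit operators `GF` and `FG` as atomic
operators. -/
inductive E (Ap : Type) : Type
  | tt    : E Ap
  | ff    : E Ap
  | pos   : Ap → E Ap
  | nlit  : Ap → E Ap
  | and   : E Ap → E Ap → E Ap
  | or    : E Ap → E Ap → E Ap
  | next  : E Ap → E Ap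
  | untl  : E Ap → E Ap → E Ap
  | wuntl : E Ap → E Ap → E Ap
  | gf    : E Ap → E Ap
  | fg    : E Ap → E Ap
  deriving DecidableEq

/-- Infinite words over the alphabet `2^Ap`. -/
abbrev Word (Ap : Type) := ℕ → Set Ap

/-- Suffix of a word starting at position `i`. -/
def suff {Ap : Type} (w : Word Ap) (i : ℕ) : Word Ap := fun n => w (n + i)

/-- Satisfaction relation for extended LTL. -/
def Sat {Ap : Type} : Word Ap → E Ap → Prop
  | _, E.tt => True
  | _, E.ff => False
  | w, E.pos a => a ∈ w 0
  | w, E.nlit a => a ∉ w 0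
  | w, E.and φ ψ => Sat w φ ∧ Sat w ψ
  | w, E.or φ ψ => Sat w φ ∨ Sat w ψ
  | w, E.next φ => Sat (suff w 1) φ
  | w, E.untl φ ψ => ∃ k, Sat (suff w k) ψ ∧ ∀ j < k, Sat (suff w j) φ
  | w, E.wuntl φ ψ => (∀ k, Sat (suff w k) φ) ∨ ∃ k, Sat (suff w k) ψ ∧ ∀ j < k, Sat (suff w j) φ
  | w, E.gf φ => ∀ i : ℕ, ∃ j : ℕ, i ≤ j ∧ Sat (suff w j) φ
  | w, E.fg φ => ∃ i : ℕ, ∀ j : ℕ, i ≤ j → Sat (suff w j) φ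

/-- Equivalence of extended LTL formulas. -/
def Equiv {Ap : Type} (φ ψ : E Ap) : Prop := ∀ w : Word Ap, Sat w φ ↔ Sat w ψ

/-- G φ := φ W ff. -/
def Gf {Ap : Type} (φ : E Ap) : E Ap := E.wuntl φ E.ff

/-- Number of nodes of the syntax tree. -/
def size {Ap : Type} : E Ap → ℕ
  | E.tt => 1
  | E.ff => 1
  | E.pos _ => 1
  | E.nlit _ => 1
  | E.and φ ψ => size φ + size ψ + 1
  | E.or φ ψ => size φ + size ψ + 1
  | E.next φ => size φ + 1
  | E.untl φ ψ => size φ + size ψ + 1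
  | E.wuntl φ ψ => size φ + size ψ + 1
  | E.gf φ => size φ + 1
  | E.fg φ => size φ + 1

variable {Ap : Type} [DecidableEq Ap]

/-- The set of subformulas of an extended LTL formula. -/
def sf : E Ap → Finset (E Ap)
  | E.tt => {E.tt}
  | E.ff => {E.ff}
  | E.pos a => {E.pos a}
  | E.nlit a => {E.nlit a}
  | E.and φ ψ => insert (E.and φ ψ) (sf φ ∪ sf ψ)
  | E.or φ ψ => insert (E.or φ ψ) (sf φ ∪ sf ψ)
  | E.next φ => insert (E.next φ) (sf φ)
  | E.untl φ ψ => insert (E.untl φ ψ) (sf φ ∪ sf ψ)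
  | E.wuntl φ ψ => insert (E.wuntl φ ψ) (sf φ ∪ sf ψ)
  | E.gf φ => insert (E.gf φ) (sf φ)
  | E.fg φ => insert (E.fg φ) (sf φ)

/-- Number of `U`-nodes of the syntax tree that are not below any limit node. -/
def uNL : E Ap → ℕ
  | E.untl φ ψ => uNL φ + uNL ψ + 1
  | E.wuntl φ ψ => uNL φ + uNL ψ
  | E.and φ ψ => uNL φ + uNL ψ
  | E.or φ ψ => uNL φ + uNL ψ
  | E.next φ => uNL φ
  | E.gf _ => 0
  | E.fg _ => 0
  | _ => 0

/-- `ubw φ`: number of `U`-nodes of the syntax tree of `φ` that are below some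
`W`-node but not below any limit node. -/
def ubw : E Ap → ℕ
  | E.wuntl φ ψ => uNL φ + uNL ψ
  | E.untl φ ψ => ubw φ + ubw ψ
  | E.and φ ψ => ubw φ + ubw ψ
  | E.or φ ψ => ubw φ + ubw ψ
  | E.next φ => ubw φ
  | E.gf _ => 0
  | E.fg _ => 0
  | _ => 0

/-- Is the formula a limit (`GF`- or `FG`-) formula? -/
def isLimit : E Ap → Bool
  | E.gf _ => true
  | E.fg _ => true
  | _ => false

/-- Limit subformulas of a formula. -/
def lims (φ : E Ap) : Finset (E Ap) := (sf φ).filter fun ψ => isLimit ψ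

/-- The set of distinct limit subformulas of `φ` that are proper subformulas of
some temporal subformula of `φ`. -/
def gfbaSet : E Ap → Finset (E Ap)
  | E.and φ ψ => gfbaSet φ ∪ gfbaSet ψ
  | E.or φ ψ => gfbaSet φ ∪ gfbaSet ψ
  | E.next φ => lims φ ∪ gfbaSet φ
  | E.untl φ ψ => (lims φ ∪ lims ψ) ∪ (gfbaSet φ ∪ gfbaSet ψ)
  | E.wuntl φ ψ => (lims φ ∪ lims ψ) ∪ (gfbaSet φ ∪ gfbaSet ψ)
  | E.gf φ => lims φ ∪ gfbaSet φ
  | E.fg φ => lims φ ∪ gfbaSet φ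
  | _ => ∅

/-- `gfba φ`: number of distinct limit subformulas of `φ` that are proper
subformulas of some temporal subformula of `φ`. -/
def gfba (φ : E Ap) : ℕ := (gfbaSet φ).card


/-! ### Auxiliary machinery for the normalisation theorem -/

set_option linter.unusedSectionVars false

@[simp] lemma suff_suff (w : Word Ap) (i k : ℕ) : suff (suff w i) k = suff w (k + i) := by
  funext n; simp [suff, Nat.add_assoc]

@[simp] lemma suff_zero (w : Word Ap) : suff w 0 = w := by
  funext n; simp [suff]

/-- The `U`-subformulas that are not below a limit operator. -/
def Usub : E Ap → Finset (E Ap)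
  | E.untl φ ψ => insert (E.untl φ ψ) (Usub φ ∪ Usub ψ)
  | E.wuntl φ ψ => Usub φ ∪ Usub ψ
  | E.and φ ψ => Usub φ ∪ Usub ψ
  | E.or φ ψ => Usub φ ∪ Usub ψ
  | E.next φ => Usub φ
  | _ => ∅

/-- Substitute the non-limit `U`-subformulas: members of `M` become `W`,
non-members become `ff`. -/
def subst (M : Finset (E Ap)) : E Ap → E Ap
  | E.untl φ ψ => if E.untl φ ψ ∈ M then E.wuntl (subst M φ) (subst M ψ) else E.ff
  | E.wuntl φ ψ => E.wuntl (subst M φ) (subst M ψ)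
  | E.and φ ψ => E.and (subst M φ) (subst M ψ)
  | E.or φ ψ => E.or (subst M φ) (subst M ψ)
  | E.next φ => E.next (subst M φ)
  | x => x

/-- Right-hand side of an `U`-formula. -/
def rhs : E Ap → E Ap
  | E.untl _ ψ => ψ
  | x => x

/-- `GF` of the right-hand side of an `U`-formula. -/
def gfOf : E Ap → E Ap
  | E.untl _ ψ => E.gf ψ
  | _ => E.tt

/-- Big disjunction. -/
def orN : List (E Ap) → E Ap := List.foldr E.or E.ff

/-- Big conjunction. -/
def andN : List (E Ap) → E Ap := List.foldr E.and E.tt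

lemma sat_orN (w : Word Ap) (l : List (E Ap)) : Sat w (orN l) ↔ ∃ x ∈ l, Sat w x := by
  induction l with
  | nil => simp [orN, Sat]
  | cons a t ih => simp [orN, Sat] at ih ⊢; rw [ih]

lemma sat_andN (w : Word Ap) (l : List (E Ap)) : Sat w (andN l) ↔ ∀ x ∈ l, Sat w x := by
  induction l with
  | nil => simp [andN, Sat]
  | cons a t ih => simp [andN, Sat, List.forall_mem_cons] at ih ⊢; rw [ih]; tauto

lemma one_le_size (φ : E Ap) : 1 ≤ size φ := by
  cases φ <;> simp [size]

lemma size_orN_le (l : List (E Ap)) (c : ℕ) (h : ∀ x ∈ l, size x ≤ c) :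
    size (orN l) ≤ l.length * (c + 1) + 1 := by
  induction l with
  | nil => simp [orN, size]
  | cons a t ih =>
    have ha := h a (by simp)
    have ht := ih (fun x hx => h x (by simp [hx]))
    simp only [orN, List.foldr] at ht ⊢
    simp only [size, List.length_cons]
    have : (t.length + 1) * (c + 1) = t.length * (c + 1) + (c + 1) := by ring
    omega

lemma size_andN_le (l : List (E Ap)) (c : ℕ) (h : ∀ x ∈ l, size x ≤ c) :
    size (andN l) ≤ l.length * (c + 1) + 1 := by
  induction l with
  | nil => simp [andN, size]
  | cons a t ih =>
    have ha := h a (by simp)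
    have ht := ih (fun x hx => h x (by simp [hx]))
    simp only [andN, List.foldr] at ht ⊢
    simp only [size, List.length_cons]
    have : (t.length + 1) * (c + 1) = t.length * (c + 1) + (c + 1) := by ring
    omega

lemma mem_sf_self (φ : E Ap) : φ ∈ sf φ := by
  cases φ <;> simp [sf]

lemma sf_trans : ∀ δ χ : E Ap, χ ∈ sf δ → sf χ ⊆ sf δ := by
  intro δ
  induction δ with
  | tt => intro χ h; simp [sf] at h; subst h; exact fun _ => id
  | ff => intro χ h; simp [sf] at h; subst h; exact fun _ => id
  | pos a => intro χ h; simp [sf] at h; subst h; exact fun _ => id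
  | nlit a => intro χ h; simp [sf] at h; subst h; exact fun _ => id
  | and φ ψ ihφ ihψ =>
    intro χ h
    simp only [sf, Finset.mem_insert, Finset.mem_union] at h
    rcases h with h | h | h
    · subst h; exact fun _ => id
    · exact (ihφ χ h).trans (by intro x hx; simp [sf, hx])
    · exact (ihψ χ h).trans (by intro x hx; simp [sf, hx])
  | or φ ψ ihφ ihψ =>
    intro χ h
    simp only [sf, Finset.mem_insert, Finset.mem_union] at h
    rcases h with h | h | h
    · subst h; exact fun _ => id
    · exact (ihφ χ h).trans (by intro x hx; simp [sf, hx])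
    · exact (ihψ χ h).trans (by intro x hx; simp [sf, hx])
  | next φ ihφ =>
    intro χ h
    simp only [sf, Finset.mem_insert] at h
    rcases h with h | h
    · subst h; exact fun _ => id
    · exact (ihφ χ h).trans (by intro x hx; simp [sf, hx])
  | untl φ ψ ihφ ihψ =>
    intro χ h
    simp only [sf, Finset.mem_insert, Finset.mem_union] at h
    rcases h with h | h | h
    · subst h; exact fun _ => id
    · exact (ihφ χ h).trans (by intro x hx; simp [sf, hx])
    · exact (ihψ χ h).trans (by intro x hx; simp [sf, hx])
  | wuntl φ ψ ihφ ihψ =>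
    intro χ h
    simp only [sf, Finset.mem_insert, Finset.mem_union] at h
    rcases h with h | h | h
    · subst h; exact fun _ => id
    · exact (ihφ χ h).trans (by intro x hx; simp [sf, hx])
    · exact (ihψ χ h).trans (by intro x hx; simp [sf, hx])
  | gf φ ihφ =>
    intro χ h
    simp only [sf, Finset.mem_insert] at h
    rcases h with h | h
    · subst h; exact fun _ => id
    · exact (ihφ χ h).trans (by intro x hx; simp [sf, hx])
  | fg φ ihφ =>
    intro χ h
    simp only [sf, Finset.mem_insert] at h
    rcases h with h | h
    · subst h; exact fun _ => id
    · exact (ihφ χ h).trans (by intro x hx; simp [sf, hx])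

lemma size_le_of_mem_sf : ∀ δ χ : E Ap, χ ∈ sf δ → size χ ≤ size δ := by
  intro δ
  induction δ with
  | tt => intro χ h; simp [sf] at h; subst h; exact le_refl _
  | ff => intro χ h; simp [sf] at h; subst h; exact le_refl _
  | pos a => intro χ h; simp [sf] at h; subst h; exact le_refl _
  | nlit a => intro χ h; simp [sf] at h; subst h; exact le_refl _
  | and φ ψ ihφ ihψ =>
    intro χ h
    simp only [sf, Finset.mem_insert, Finset.mem_union] at h
    rcases h with h | h | h
    · subst h; exact le_refl _
    · have := ihφ χ h; simp [size]; omega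
    · have := ihψ χ h; simp [size]; omega
  | or φ ψ ihφ ihψ =>
    intro χ h
    simp only [sf, Finset.mem_insert, Finset.mem_union] at h
    rcases h with h | h | h
    · subst h; exact le_refl _
    · have := ihφ χ h; simp [size]; omega
    · have := ihψ χ h; simp [size]; omega
  | next φ ihφ =>
    intro χ h
    simp only [sf, Finset.mem_insert] at h
    rcases h with h | h
    · subst h; exact le_refl _
    · have := ihφ χ h; simp [size]; omega
  | untl φ ψ ihφ ihψ =>
    intro χ h
    simp only [sf, Finset.mem_insert, Finset.mem_union] at h
    rcases h with h | h | h
    · subst h; exact le_refl _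
    · have := ihφ χ h; simp [size]; omega
    · have := ihψ χ h; simp [size]; omega
  | wuntl φ ψ ihφ ihψ =>
    intro χ h
    simp only [sf, Finset.mem_insert, Finset.mem_union] at h
    rcases h with h | h | h
    · subst h; exact le_refl _
    · have := ihφ χ h; simp [size]; omega
    · have := ihψ χ h; simp [size]; omega
  | gf φ ihφ =>
    intro χ h
    simp only [sf, Finset.mem_insert] at h
    rcases h with h | h
    · subst h; exact le_refl _
    · have := ihφ χ h; simp [size]; omega
  | fg φ ihφ =>
    intro χ h
    simp only [sf, Finset.mem_insert] at h
    rcases h with h | h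
    · subst h; exact le_refl _
    · have := ihφ χ h; simp [size]; omega

lemma gf_body_mem {δ ψ : E Ap} (h : E.gf ψ ∈ sf δ) : ψ ∈ sf δ :=
  sf_trans δ (E.gf ψ) h (by simp [sf, mem_sf_self])

lemma Usub_subset_sf : ∀ δ : E Ap, Usub δ ⊆ sf δ := by
  intro δ
  induction δ with
  | and φ ψ ihφ ihψ =>
    intro x hx; simp only [Usub, Finset.mem_union] at hx
    simp only [sf, Finset.mem_insert, Finset.mem_union]
    rcases hx with h | h
    · exact Or.inr (Or.inl (ihφ h))
    · exact Or.inr (Or.inr (ihψ h))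
  | or φ ψ ihφ ihψ =>
    intro x hx; simp only [Usub, Finset.mem_union] at hx
    simp only [sf, Finset.mem_insert, Finset.mem_union]
    rcases hx with h | h
    · exact Or.inr (Or.inl (ihφ h))
    · exact Or.inr (Or.inr (ihψ h))
  | next φ ihφ =>
    intro x hx; simp only [Usub] at hx
    simp only [sf, Finset.mem_insert]
    exact Or.inr (ihφ hx)
  | untl φ ψ ihφ ihψ =>
    intro x hx; simp only [Usub, Finset.mem_insert, Finset.mem_union] at hx
    simp only [sf, Finset.mem_insert, Finset.mem_union]
    rcases hx with h | h | h
    · exact Or.inl h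
    · exact Or.inr (Or.inl (ihφ h))
    · exact Or.inr (Or.inr (ihψ h))
  | wuntl φ ψ ihφ ihψ =>
    intro x hx; simp only [Usub, Finset.mem_union] at hx
    simp only [sf, Finset.mem_insert, Finset.mem_union]
    rcases hx with h | h
    · exact Or.inr (Or.inl (ihφ h))
    · exact Or.inr (Or.inr (ihψ h))
  | _ => intro x hx; simp [Usub] at hx

lemma Usub_card_le : ∀ δ : E Ap, (Usub δ).card ≤ size δ := by
  intro δ
  induction δ with
  | and φ ψ ihφ ihψ =>
    have := Finset.card_union_le (Usub φ) (Usub ψ)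
    simp only [Usub, size]; omega
  | or φ ψ ihφ ihψ =>
    have := Finset.card_union_le (Usub φ) (Usub ψ)
    simp only [Usub, size]; omega
  | next φ ihφ => simp only [Usub, size]; omega
  | untl φ ψ ihφ ihψ =>
    have h1 := Finset.card_insert_le (E.untl φ ψ) (Usub φ ∪ Usub ψ)
    have h2 := Finset.card_union_le (Usub φ) (Usub ψ)
    simp only [Usub, size]; omega
  | wuntl φ ψ ihφ ihψ =>
    have := Finset.card_union_le (Usub φ) (Usub ψ)
    simp only [Usub, size]; omega
  | _ => simp [Usub, size]

lemma Usub_shape : ∀ δ χ : E Ap, χ ∈ Usub δ → ∃ p q, χ = E.untl p q := by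
  intro δ
  induction δ with
  | and φ ψ ihφ ihψ =>
    intro χ hχ; simp only [Usub, Finset.mem_union] at hχ
    rcases hχ with h | h
    · exact ihφ χ h
    · exact ihψ χ h
  | or φ ψ ihφ ihψ =>
    intro χ hχ; simp only [Usub, Finset.mem_union] at hχ
    rcases hχ with h | h
    · exact ihφ χ h
    · exact ihψ χ h
  | next φ ihφ => intro χ hχ; exact ihφ χ hχ
  | untl φ ψ ihφ ihψ =>
    intro χ hχ; simp only [Usub, Finset.mem_insert, Finset.mem_union] at hχ
    rcases hχ with h | h | h
    · exact ⟨φ, ψ, h⟩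
    · exact ihφ χ h
    · exact ihψ χ h
  | wuntl φ ψ ihφ ihψ =>
    intro χ hχ; simp only [Usub, Finset.mem_union] at hχ
    rcases hχ with h | h
    · exact ihφ χ h
    · exact ihψ χ h
  | _ => intro χ hχ; simp [Usub] at hχ

lemma size_subst_le (M : Finset (E Ap)) : ∀ δ : E Ap, size (subst M δ) ≤ size δ := by
  intro δ
  induction δ with
  | and φ ψ ihφ ihψ => simp only [subst, size]; omega
  | or φ ψ ihφ ihψ => simp only [subst, size]; omega
  | next φ ihφ => simp only [subst, size]; omega
  | untl φ ψ ihφ ihψ =>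
    simp only [subst]
    split
    · simp only [size]; omega
    · simp only [size]; have := one_le_size φ; have := one_le_size ψ; omega
  | wuntl φ ψ ihφ ihψ => simp only [subst, size]; omega
  | _ => simp [subst, size]

lemma uNL_subst (M : Finset (E Ap)) : ∀ δ : E Ap, uNL (subst M δ) = 0 := by
  intro δ
  induction δ with
  | and φ ψ ihφ ihψ => simp only [subst, uNL]; omega
  | or φ ψ ihφ ihψ => simp only [subst, uNL]; omega
  | next φ ihφ => simp only [subst, uNL]; omega
  | untl φ ψ ihφ ihψ =>
    simp only [subst]
    split
    · simp only [uNL]; omega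
    · simp [uNL]
  | wuntl φ ψ ihφ ihψ => simp only [subst, uNL]; omega
  | _ => simp [subst, uNL]

lemma ubw_le_uNL : ∀ δ : E Ap, ubw δ ≤ uNL δ := by
  intro δ
  induction δ with
  | and φ ψ ihφ ihψ => simp only [ubw, uNL]; omega
  | or φ ψ ihφ ihψ => simp only [ubw, uNL]; omega
  | next φ ihφ => simp only [ubw, uNL]; omega
  | untl φ ψ ihφ ihψ => simp only [ubw, uNL]; omega
  | wuntl φ ψ ihφ ihψ => simp only [ubw, uNL]; omega
  | _ => simp [ubw, uNL]

lemma ubw_subst (M : Finset (E Ap)) (δ : E Ap) : ubw (subst M δ) = 0 := by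
  have h1 := ubw_le_uNL (subst M δ)
  have h2 := uNL_subst M δ
  omega

lemma ubw_orN (l : List (E Ap)) (h : ∀ x ∈ l, ubw x = 0) : ubw (orN l) = 0 := by
  induction l with
  | nil => simp [orN, ubw]
  | cons a t ih =>
    have := h a (by simp)
    have := ih (fun x hx => h x (by simp [hx]))
    simp only [orN, List.foldr, ubw] at *
    omega

lemma ubw_andN (l : List (E Ap)) (h : ∀ x ∈ l, ubw x = 0) : ubw (andN l) = 0 := by
  induction l with
  | nil => simp [andN, ubw]
  | cons a t ih =>
    have := h a (by simp)
    have := ih (fun x hx => h x (by simp [hx]))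
    simp only [andN, List.foldr, ubw] at *
    omega

lemma limit_sf_subst (M : Finset (E Ap)) :
    ∀ δ χ : E Ap, isLimit χ = true → χ ∈ sf (subst M δ) → χ ∈ sf δ := by
  intro δ
  induction δ with
  | and φ ψ ihφ ihψ =>
    intro χ hl h
    simp only [subst, sf, Finset.mem_insert, Finset.mem_union] at h ⊢
    rcases h with h | h | h
    · subst h; simp [isLimit] at hl
    · exact Or.inr (Or.inl (ihφ χ hl h))
    · exact Or.inr (Or.inr (ihψ χ hl h))
  | or φ ψ ihφ ihψ =>
    intro χ hl h
    simp only [subst, sf, Finset.mem_insert, Finset.mem_union] at h ⊢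
    rcases h with h | h | h
    · subst h; simp [isLimit] at hl
    · exact Or.inr (Or.inl (ihφ χ hl h))
    · exact Or.inr (Or.inr (ihψ χ hl h))
  | next φ ihφ =>
    intro χ hl h
    simp only [subst, sf, Finset.mem_insert] at h ⊢
    rcases h with h | h
    · subst h; simp [isLimit] at hl
    · exact Or.inr (ihφ χ hl h)
  | untl φ ψ ihφ ihψ =>
    intro χ hl h
    simp only [subst] at h
    simp only [sf, Finset.mem_insert, Finset.mem_union]
    split at h
    · simp only [sf, Finset.mem_insert, Finset.mem_union] at h
      rcases h with h | h | h
      · subst h; simp [isLimit] at hl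
      · exact Or.inr (Or.inl (ihφ χ hl h))
      · exact Or.inr (Or.inr (ihψ χ hl h))
    · simp only [sf, Finset.mem_singleton] at h
      subst h; simp [isLimit] at hl
  | wuntl φ ψ ihφ ihψ =>
    intro χ hl h
    simp only [subst, sf, Finset.mem_insert, Finset.mem_union] at h ⊢
    rcases h with h | h | h
    · subst h; simp [isLimit] at hl
    · exact Or.inr (Or.inl (ihφ χ hl h))
    · exact Or.inr (Or.inr (ihψ χ hl h))
  | _ => intro χ hl h; simp only [subst] at h; exact h

/-- Soundness of the substitution: if the right-hand side of every `U`-formula in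
`M` holds infinitely often, then the substituted formula implies the original at
every suffix. -/
lemma subst_sound (M : Finset (E Ap)) (w : Word Ap)
    (hM : ∀ p q : E Ap, E.untl p q ∈ M → ∀ i, ∃ j, i ≤ j ∧ Sat (suff w j) q) :
    ∀ δ : E Ap, ∀ i, Sat (suff w i) (subst M δ) → Sat (suff w i) δ := by
  intro δ
  induction δ with
  | and φ ψ ihφ ihψ =>
    intro i h
    simp only [subst, Sat] at h ⊢
    exact ⟨ihφ i h.1, ihψ i h.2⟩
  | or φ ψ ihφ ihψ =>
    intro i h
    simp only [subst, Sat] at h ⊢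
    rcases h with h | h
    · exact Or.inl (ihφ i h)
    · exact Or.inr (ihψ i h)
  | next φ ihφ =>
    intro i h
    simp only [subst, Sat, suff_suff] at h ⊢
    exact ihφ (1 + i) h
  | untl φ ψ ihφ ihψ =>
    intro i h
    simp only [subst] at h
    split at h
    case isTrue hmem =>
      simp only [Sat, suff_suff] at h ⊢
      rcases h with h | ⟨k, hk, hbef⟩
      · -- the substituted φ holds forever from i; use hM to find ψ
        obtain ⟨j, hij, hj⟩ := hM φ ψ hmem i
        refine ⟨j - i, ?_, ?_⟩
        · have : j - i + i = j := by omega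
          rw [this]; exact hj
        · intro j' _; exact ihφ (j' + i) (h j')
      · exact ⟨k, ihψ (k + i) hk, fun j hj => ihφ (j + i) (hbef j hj)⟩
    case isFalse => simp [Sat] at h
  | wuntl φ ψ ihφ ihψ =>
    intro i h
    simp only [subst, Sat, suff_suff] at h ⊢
    rcases h with h | ⟨k, hk, hbef⟩
    · exact Or.inl fun k => ihφ (k + i) (h k)
    · exact Or.inr ⟨k, ihψ (k + i) hk, fun j hj => ihφ (j + i) (hbef j hj)⟩
  | _ => intro i h; simp only [subst] at h; exact h

/-- Completeness of the substitution: on a word where the right-hand sides of all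
`U`-subformulas not in `M` never hold, the original formula implies the
substituted one at every suffix. -/
lemma subst_complete (M : Finset (E Ap)) (v : Word Ap) :
    ∀ δ : E Ap,
      (∀ p q : E Ap, E.untl p q ∈ Usub δ → E.untl p q ∉ M → ∀ j, ¬ Sat (suff v j) q) →
      ∀ i, Sat (suff v i) δ → Sat (suff v i) (subst M δ) := by
  intro δ
  induction δ with
  | and φ ψ ihφ ihψ =>
    intro hc i h
    have hcφ : ∀ p q : E Ap, E.untl p q ∈ Usub φ → E.untl p q ∉ M → ∀ j, ¬ Sat (suff v j) q :=
      fun p q hm => hc p q (by simp [Usub, hm])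
    have hcψ : ∀ p q : E Ap, E.untl p q ∈ Usub ψ → E.untl p q ∉ M → ∀ j, ¬ Sat (suff v j) q :=
      fun p q hm => hc p q (by simp [Usub, hm])
    simp only [subst, Sat] at h ⊢
    exact ⟨ihφ hcφ i h.1, ihψ hcψ i h.2⟩
  | or φ ψ ihφ ihψ =>
    intro hc i h
    have hcφ : ∀ p q : E Ap, E.untl p q ∈ Usub φ → E.untl p q ∉ M → ∀ j, ¬ Sat (suff v j) q :=
      fun p q hm => hc p q (by simp [Usub, hm])
    have hcψ : ∀ p q : E Ap, E.untl p q ∈ Usub ψ → E.untl p q ∉ M → ∀ j, ¬ Sat (suff v j) q :=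
      fun p q hm => hc p q (by simp [Usub, hm])
    simp only [subst, Sat] at h ⊢
    rcases h with h | h
    · exact Or.inl (ihφ hcφ i h)
    · exact Or.inr (ihψ hcψ i h)
  | next φ ihφ =>
    intro hc i h
    have hcφ : ∀ p q : E Ap, E.untl p q ∈ Usub φ → E.untl p q ∉ M → ∀ j, ¬ Sat (suff v j) q :=
      fun p q hm => hc p q (by simp [Usub, hm])
    simp only [subst, Sat, suff_suff] at h ⊢
    exact ihφ hcφ (1 + i) h
  | untl φ ψ ihφ ihψ =>
    intro hc i h
    have hcφ : ∀ p q : E Ap, E.untl p q ∈ Usub φ → E.untl p q ∉ M → ∀ j, ¬ Sat (suff v j) q :=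
      fun p q hm => hc p q (by simp [Usub, hm])
    have hcψ : ∀ p q : E Ap, E.untl p q ∈ Usub ψ → E.untl p q ∉ M → ∀ j, ¬ Sat (suff v j) q :=
      fun p q hm => hc p q (by simp [Usub, hm])
    simp only [Sat, suff_suff] at h
    obtain ⟨k, hk, hbef⟩ := h
    simp only [subst]
    split
    case isTrue hmem =>
      simp only [Sat, suff_suff]
      exact Or.inr ⟨k, ihψ hcψ (k + i) hk, fun j hj => ihφ hcφ (j + i) (hbef j hj)⟩
    case isFalse hmem =>
      exact absurd hk (hc φ ψ (by simp [Usub]) hmem (k + i))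
  | wuntl φ ψ ihφ ihψ =>
    intro hc i h
    have hcφ : ∀ p q : E Ap, E.untl p q ∈ Usub φ → E.untl p q ∉ M → ∀ j, ¬ Sat (suff v j) q :=
      fun p q hm => hc p q (by simp [Usub, hm])
    have hcψ : ∀ p q : E Ap, E.untl p q ∈ Usub ψ → E.untl p q ∉ M → ∀ j, ¬ Sat (suff v j) q :=
      fun p q hm => hc p q (by simp [Usub, hm])
    simp only [subst, Sat, suff_suff] at h ⊢
    rcases h with h | ⟨k, hk, hbef⟩
    · exact Or.inl fun k => ihφ hcφ (k + i) (h k)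
    · exact Or.inr ⟨k, ihψ hcψ (k + i) hk, fun j hj => ihφ hcφ (j + i) (hbef j hj)⟩
  | _ => intro hc i h; simp only [subst]; exact h

/-- Over a finite set, finitely many "eventually forever" properties admit a
uniform bound. -/
lemma exists_uniform_bound (S : Finset (E Ap)) (P : E Ap → ℕ → Prop)
    (h : ∀ c ∈ S, ∃ i, ∀ j, i ≤ j → P c j) :
    ∃ i, ∀ c ∈ S, ∀ j, i ≤ j → P c j := by
  classical
  induction S using Finset.induction_on with
  | empty => exact ⟨0, by simp⟩
  | @insert a s ha ih =>
    obtain ⟨i₁, hi₁⟩ := h a (by simp)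
    obtain ⟨i₂, hi₂⟩ := ih (fun c hc => h c (by simp [hc]))
    refine ⟨max i₁ i₂, fun c hc j hj => ?_⟩
    rcases Finset.mem_insert.mp hc with rfl | hc
    · exact hi₁ j (le_trans (le_max_left _ _) hj)
    · exact hi₂ c hc j (le_trans (le_max_right _ _) hj)

/-- The list of disjuncts used to normalise `G α`. -/
noncomputable def gDisjuncts (α : E Ap) : List (E Ap) :=
  (Usub α).powerset.toList.map fun M =>
    E.and (E.wuntl (subst M α) E.ff) (andN (M.toList.map gfOf))

/-- The key expansion lemma for `G α`. -/
lemma G_key (α : E Ap) (w : Word Ap) :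
    (∀ k, Sat (suff w k) α) ↔
      ∃ k, Sat (suff w k) (orN (gDisjuncts α)) ∧ ∀ j < k, Sat (suff w j) α := by
  classical
  constructor
  · intro hG
    set M := (Usub α).filter (fun χ => ∀ i, ∃ j, i ≤ j ∧ Sat (suff w j) (rhs χ)) with hMdef
    have hb : ∀ c ∈ (Usub α) \ M, ∃ i, ∀ j, i ≤ j → ¬ Sat (suff w j) (rhs c) := by
      intro c hc
      rw [Finset.mem_sdiff] at hc
      have hno : ¬ (∀ i, ∃ j, i ≤ j ∧ Sat (suff w j) (rhs c)) := by
        intro hcon; exact hc.2 (Finset.mem_filter.mpr ⟨hc.1, hcon⟩)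
      push_neg at hno
      exact hno
    obtain ⟨i₀, hi₀⟩ := exists_uniform_bound ((Usub α) \ M)
      (fun c j => ¬ Sat (suff w j) (rhs c)) hb
    refine ⟨i₀, ?_, fun j _ => hG j⟩
    rw [sat_orN]
    refine ⟨E.and (E.wuntl (subst M α) E.ff) (andN (M.toList.map gfOf)), ?_, ?_⟩
    · simp only [gDisjuncts, List.mem_map]
      exact ⟨M, by
        rw [Finset.mem_toList, Finset.mem_powerset]
        exact Finset.filter_subset _ _, rfl⟩
    · simp only [Sat]
      constructor
      · -- the `G (subst M α)` part
        refine Or.inl fun k => ?_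
        have hcond : ∀ p q : E Ap, E.untl p q ∈ Usub α → E.untl p q ∉ M →
            ∀ j, ¬ Sat (suff (suff w i₀) j) q := by
          intro p q hin hout j
          have hmem : E.untl p q ∈ (Usub α) \ M := Finset.mem_sdiff.mpr ⟨hin, hout⟩
          have := hi₀ (E.untl p q) hmem (j + i₀) (by omega)
          simpa [rhs, suff_suff] using this
        have := subst_complete M (suff w i₀) α hcond k (by rw [suff_suff]; exact hG (k + i₀))
        exact this
      · rw [sat_andN]
        intro x hx
        rw [List.mem_map] at hx
        obtain ⟨χ, hχM, rfl⟩ := hx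
        have hχM' : χ ∈ M := Finset.mem_toList.mp hχM
        obtain ⟨p, q, rfl⟩ := Usub_shape α χ (Finset.filter_subset _ _ hχM')
        have hfil := (Finset.mem_filter.mp hχM').2
        simp only [rhs] at hfil
        simp only [gfOf, Sat]
        intro i
        obtain ⟨j, hij, hj⟩ := hfil (i + i₀)
        refine ⟨j - i₀, by omega, ?_⟩
        have hje : j - i₀ + i₀ = j := by omega
        rw [suff_suff, hje]
        exact hj
  · rintro ⟨k, hOr, hpre⟩
    rw [sat_orN] at hOr
    obtain ⟨x, hxl, hx⟩ := hOr
    simp only [gDisjuncts, List.mem_map] at hxl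
    obtain ⟨M, hMsub, rfl⟩ := hxl
    simp only [Sat] at hx
    obtain ⟨h1, h2⟩ := hx
    have hAll : ∀ k', Sat (suff (suff w k) k') (subst M α) := by
      rcases h1 with h | ⟨k', hk', _⟩
      · exact h
      · simp [Sat] at hk'
    have hMgood : ∀ p q : E Ap, E.untl p q ∈ M →
        ∀ i, ∃ j, i ≤ j ∧ Sat (suff (suff w k) j) q := by
      intro p q hpq i
      rw [sat_andN] at h2
      have := h2 (E.gf q) (by
        rw [List.mem_map]
        exact ⟨E.untl p q, Finset.mem_toList.mpr hpq, rfl⟩)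
      exact this i
    have hsound := subst_sound M (suff w k) hMgood α
    intro j
    rcases lt_or_ge j k with hj | hj
    · exact hpre j hj
    · have hjk : j - k + k = j := by omega
      have := hsound (j - k) (hAll (j - k))
      rwa [suff_suff, hjk] at this

lemma ubw_gfOf (χ : E Ap) : ubw (gfOf χ) = 0 := by
  cases χ <;> simp [gfOf, ubw]

lemma ubw_gDisjuncts (α : E Ap) : ubw (orN (gDisjuncts α)) = 0 := by
  apply ubw_orN
  intro x hx
  simp only [gDisjuncts, List.mem_map] at hx
  obtain ⟨M, _, rfl⟩ := hx
  have h1 : ubw (andN (M.toList.map gfOf)) = 0 := by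
    apply ubw_andN
    intro y hy
    rw [List.mem_map] at hy
    obtain ⟨χ, _, rfl⟩ := hy
    exact ubw_gfOf χ
  have h2 := uNL_subst M α
  simp only [ubw, uNL, h1, h2]

lemma length_gDisjuncts (α : E Ap) : (gDisjuncts α).length ≤ 2 ^ size α := by
  simp only [gDisjuncts, List.length_map, Finset.length_toList, Finset.card_powerset]
  exact Nat.pow_le_pow_right (by norm_num) (Usub_card_le α)

lemma size_disjunct_le (α : E Ap) (M : Finset (E Ap)) (hM : M ⊆ Usub α) :
    size (E.and (E.wuntl (subst M α) E.ff) (andN (M.toList.map gfOf)))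
      ≤ size α ^ 2 + 2 * size α + 4 := by
  set a := size α with ha
  have h1 : size (subst M α) ≤ a := size_subst_le M α
  have h2 : size (andN (M.toList.map gfOf)) ≤ a * (a + 1) + 1 := by
    have hlen : (M.toList.map gfOf).length ≤ a := by
      rw [List.length_map, Finset.length_toList]
      exact le_trans (Finset.card_le_card hM) (Usub_card_le α)
    have helt : ∀ x ∈ M.toList.map gfOf, size x ≤ a := by
      intro x hx
      rw [List.mem_map] at hx
      obtain ⟨χ, hχ, rfl⟩ := hx
      have hχU : χ ∈ Usub α := hM (Finset.mem_toList.mp hχ)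
      obtain ⟨p, q, rfl⟩ := Usub_shape α χ hχU
      have hsz : size (E.untl p q) ≤ a := size_le_of_mem_sf α _ (Usub_subset_sf α hχU)
      simp only [gfOf, size] at hsz ⊢
      omega
    calc size (andN (M.toList.map gfOf)) ≤ (M.toList.map gfOf).length * (a + 1) + 1 :=
          size_andN_le _ _ helt
      _ ≤ a * (a + 1) + 1 := by
          have := Nat.mul_le_mul_right (a + 1) hlen; omega
  simp only [size]
  nlinarith [h1, h2]

lemma size_gDisjuncts (α : E Ap) :
    size (orN (gDisjuncts α)) ≤ 2 ^ size α * (size α ^ 2 + 2 * size α + 5) + 1 := by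
  have helt : ∀ x ∈ gDisjuncts α, size x ≤ size α ^ 2 + 2 * size α + 4 := by
    intro x hx
    simp only [gDisjuncts, List.mem_map] at hx
    obtain ⟨M, hM, rfl⟩ := hx
    rw [Finset.mem_toList, Finset.mem_powerset] at hM
    exact size_disjunct_le α M hM
  calc size (orN (gDisjuncts α))
      ≤ (gDisjuncts α).length * (size α ^ 2 + 2 * size α + 4 + 1) + 1 :=
        size_orN_le _ _ helt
    _ = (gDisjuncts α).length * (size α ^ 2 + 2 * size α + 5) + 1 := by ring_nf
    _ ≤ 2 ^ size α * (size α ^ 2 + 2 * size α + 5) + 1 := by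
        have := Nat.mul_le_mul_right (size α ^ 2 + 2 * size α + 5) (length_gDisjuncts α)
        omega

lemma limit_sf_orN {χ : E Ap} (hχ : isLimit χ = true) :
    ∀ l : List (E Ap), χ ∈ sf (orN l) → ∃ x ∈ l, χ ∈ sf x := by
  intro l
  induction l with
  | nil => intro h; simp only [orN, List.foldr, sf, Finset.mem_singleton] at h; subst h; simp [isLimit] at hχ
  | cons a t ih =>
    intro h
    simp only [orN, List.foldr, sf, Finset.mem_insert, Finset.mem_union] at h
    rcases h with h | h | h
    · subst h; simp [isLimit] at hχ
    · exact ⟨a, by simp, h⟩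
    · obtain ⟨x, hx, hx'⟩ := ih h
      exact ⟨x, by simp [hx], hx'⟩

lemma limit_sf_andN {χ : E Ap} (hχ : isLimit χ = true) :
    ∀ l : List (E Ap), χ ∈ sf (andN l) → ∃ x ∈ l, χ ∈ sf x := by
  intro l
  induction l with
  | nil => intro h; simp only [andN, List.foldr, sf, Finset.mem_singleton] at h; subst h; simp [isLimit] at hχ
  | cons a t ih =>
    intro h
    simp only [andN, List.foldr, sf, Finset.mem_insert, Finset.mem_union] at h
    rcases h with h | h | h
    · subst h; simp [isLimit] at hχ
    · exact ⟨a, by simp, h⟩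
    · obtain ⟨x, hx, hx'⟩ := ih h
      exact ⟨x, by simp [hx], hx'⟩

lemma limit_sf_gDisjuncts {χ : E Ap} (hχ : isLimit χ = true) (α : E Ap)
    (h : χ ∈ sf (orN (gDisjuncts α))) :
    χ ∈ sf α ∨ ∃ q, χ = E.gf q ∧ q ∈ sf α := by
  obtain ⟨x, hxl, hx⟩ := limit_sf_orN hχ _ h
  simp only [gDisjuncts, List.mem_map] at hxl
  obtain ⟨M, hM, rfl⟩ := hxl
  rw [Finset.mem_toList, Finset.mem_powerset] at hM
  simp only [sf, Finset.mem_insert, Finset.mem_union] at hx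
  rcases hx with hx | hx | hx
  · subst hx; simp [isLimit] at hχ
  · -- inside `wuntl (subst M α) ff`
    simp only [sf, Finset.mem_insert, Finset.mem_union, Finset.mem_singleton] at hx
    rcases hx with hx | hx | hx
    · subst hx; simp [isLimit] at hχ
    · exact Or.inl (limit_sf_subst M α χ hχ hx)
    · subst hx; simp [isLimit] at hχ
  · -- inside the conjunction of `GF`s
    obtain ⟨y, hyl, hy⟩ := limit_sf_andN hχ _ hx
    rw [List.mem_map] at hyl
    obtain ⟨χ', hχ', rfl⟩ := hyl
    have hχ'U : χ' ∈ Usub α := hM (Finset.mem_toList.mp hχ')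
    obtain ⟨p, q, rfl⟩ := Usub_shape α χ' hχ'U
    have hqα : q ∈ sf α := by
      have h1 : E.untl p q ∈ sf α := Usub_subset_sf α hχ'U
      exact sf_trans α _ h1 (by simp [sf, mem_sf_self])
    simp only [gfOf, sf, Finset.mem_insert] at hy
    rcases hy with hy | hy
    · exact Or.inr ⟨q, hy, hqα⟩
    · exact Or.inl (sf_trans α q hqα hy)

lemma four_pow_two_mul (n : ℕ) : (4:ℕ) ^ (2 * n) = 16 ^ n := by
  rw [pow_mul]; norm_num

lemma sixteen_pow_eq (n : ℕ) : (16:ℕ) ^ n = (2 ^ n) ^ 4 := by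
  rw [← pow_mul, Nat.mul_comm, pow_mul]
  norm_num

lemma arith_base (n : ℕ) : n ≤ 16 ^ n * n :=
  Nat.le_mul_of_pos_left n (pow_pos (by norm_num) n)

lemma arith_un (a A : ℕ) (hA : A ≤ 16 ^ a * a) : A + 1 ≤ 16 ^ (a + 1) * (a + 1) := by
  have hx : 1 ≤ (16:ℕ) ^ a := Nat.one_le_pow _ _ (by norm_num)
  rw [pow_succ]
  nlinarith [hx, hA]

lemma arith_bin (a b A B : ℕ) (ha : 1 ≤ a) (hb : 1 ≤ b)
    (hA : A ≤ 16 ^ a * a) (hB : B ≤ 16 ^ b * b) :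
    A + B + 1 ≤ 16 ^ (a + b + 1) * (a + b + 1) := by
  have hx : 1 ≤ (16:ℕ) ^ a := Nat.one_le_pow _ _ (by norm_num)
  have hy : 1 ≤ (16:ℕ) ^ b := Nat.one_le_pow _ _ (by norm_num)
  have hpow : (16:ℕ) ^ (a + b + 1) = 16 ^ a * 16 ^ b * 16 := by
    rw [pow_add, pow_add, pow_one]
  rw [hpow]
  nlinarith [hx, hy, hA, hB, Nat.mul_le_mul hx hy]

lemma arith_w (a b A B : ℕ) (ha : 1 ≤ a) (hb : 1 ≤ b)
    (hA : A ≤ 16 ^ a * a) (hB : B ≤ 16 ^ b * b) :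
    2 * A + B + (2 ^ a * (a ^ 2 + 2 * a + 5) + 1) + 3
      ≤ 16 ^ (a + b + 1) * (a + b + 1) := by
  set x := (2:ℕ) ^ a with hxdef
  set y := (2:ℕ) ^ b with hydef
  have hax : a ≤ x := le_of_lt (Nat.lt_two_pow_self (n := a))
  have hby : b ≤ y := le_of_lt (Nat.lt_two_pow_self (n := b))
  have hx1 : 1 ≤ x := Nat.one_le_pow _ _ (by norm_num)
  have hy1 : 1 ≤ y := Nat.one_le_pow _ _ (by norm_num)
  have h16a : (16:ℕ) ^ a = x ^ 4 := sixteen_pow_eq a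
  have h16b : (16:ℕ) ^ b = y ^ 4 := sixteen_pow_eq b
  have hpow : (16:ℕ) ^ (a + b + 1) = x ^ 4 * y ^ 4 * 16 := by
    rw [pow_add, pow_add, pow_one, h16a, h16b]
  rw [hpow]
  -- bound the middle term
  have e0 : a ^ 2 ≤ x ^ 2 := Nat.pow_le_pow_left hax 2
  have e1 : a ^ 2 + 2 * a + 5 ≤ 8 * x ^ 2 := by nlinarith [e0, hax, hx1]
  have e2 : x * (a ^ 2 + 2 * a + 5) ≤ 8 * x ^ 3 := by
    calc x * (a ^ 2 + 2 * a + 5) ≤ x * (8 * x ^ 2) := Nat.mul_le_mul_left _ e1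
      _ = 8 * x ^ 3 := by ring
  have e3 : (8:ℕ) * x ^ 3 ≤ 8 * x ^ 4 := by
    have : x ^ 3 ≤ x ^ 4 := Nat.pow_le_pow_right hx1 (by omega)
    omega
  have e4 : (8:ℕ) * x ^ 4 ≤ 8 * (x ^ 4 * y ^ 4) := by
    have h : 1 ≤ y ^ 4 := Nat.one_le_pow _ _ (by omega)
    calc (8:ℕ) * x ^ 4 = 8 * (x ^ 4 * 1) := by ring
      _ ≤ 8 * (x ^ 4 * y ^ 4) := Nat.mul_le_mul_left _ (Nat.mul_le_mul_left _ h)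
  have hA' : 2 * A ≤ 2 * (x ^ 4 * a) := by rw [h16a] at hA; omega
  have hB' : B ≤ y ^ 4 * b := by rwa [h16b] at hB
  have f1 : x ^ 4 * a ≤ x ^ 4 * y ^ 4 * (a + b + 1) := by
    calc x ^ 4 * a ≤ x ^ 4 * (y ^ 4 * (a + b + 1)) := by
          apply Nat.mul_le_mul_left
          calc a ≤ a + b + 1 := by omega
            _ ≤ y ^ 4 * (a + b + 1) := Nat.le_mul_of_pos_left _ (pow_pos (by omega) 4)
      _ = x ^ 4 * y ^ 4 * (a + b + 1) := by ring
  have f2 : y ^ 4 * b ≤ x ^ 4 * y ^ 4 * (a + b + 1) := by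
    calc y ^ 4 * b ≤ y ^ 4 * (x ^ 4 * (a + b + 1)) := by
          apply Nat.mul_le_mul_left
          calc b ≤ a + b + 1 := by omega
            _ ≤ x ^ 4 * (a + b + 1) := Nat.le_mul_of_pos_left _ (pow_pos (by omega) 4)
      _ = x ^ 4 * y ^ 4 * (a + b + 1) := by ring
  have f3 : (1:ℕ) ≤ x ^ 4 * y ^ 4 := by
    have := Nat.mul_le_mul (Nat.one_le_pow 4 x (by omega)) (Nat.one_le_pow 4 y (by omega))
    simpa using this
  have habs : 1 ≤ a + b + 1 := by omega
  have f4 : x ^ 4 * y ^ 4 ≤ x ^ 4 * y ^ 4 * (a + b + 1) := Nat.le_mul_of_pos_right _ (by omega)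
  -- put it together: LHS ≤ 3·X·s + 8X + 4 where X = x⁴y⁴, s = a+b+1 and 8X+4 ≤ 12X ≤ 13·X·s
  linarith [hA', hB', f1, f2, f3, f4, e2, e3, e4]

lemma easy_case (φ : E Ap) (h0 : ubw φ = 0) :
    ∃ φ' : E Ap,
      Equiv φ φ' ∧
      ubw φ' = 0 ∧
      size φ' ≤ 4 ^ (2 * size φ) * size φ ∧
      (∀ ψ : E Ap, E.gf ψ ∈ sf φ' → ψ ∈ sf φ) ∧
      (∀ ψ : E Ap, E.fg ψ ∈ sf φ' → E.fg ψ ∈ sf φ) :=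
  ⟨φ, fun _ => Iff.rfl, h0, by rw [four_pow_two_mul]; exact arith_base _,
    fun ψ h => gf_body_mem h, fun _ h => h⟩

/-- Stage 1: every extended LTL formula `φ` has an equivalent
formula `φ'` in 1-form with `‖φ'‖ ≤ 4^{2‖φ‖}·‖φ‖`; moreover for every
subformula `GF ψ` of `φ'` the formula `ψ` is a subformula of `φ`, and every
`FG`-subformula of `φ'` is a subformula of `φ`. -/
theorem stage1_oneForm {Ap : Type} [Fintype Ap] [DecidableEq Ap] (φ : E Ap) :
    ∃ φ' : E Ap,
      Equiv φ φ' ∧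
      ubw φ' = 0 ∧
      size φ' ≤ 4 ^ (2 * size φ) * size φ ∧
      (∀ ψ : E Ap, E.gf ψ ∈ sf φ' → ψ ∈ sf φ) ∧
      (∀ ψ : E Ap, E.fg ψ ∈ sf φ' → E.fg ψ ∈ sf φ) := by

  induction φ with
  | tt => exact easy_case _ (by simp [ubw])
  | ff => exact easy_case _ (by simp [ubw])
  | pos a => exact easy_case _ (by simp [ubw])
  | nlit a => exact easy_case _ (by simp [ubw])
  | gf α _ => exact easy_case _ (by simp [ubw])
  | fg α _ => exact easy_case _ (by simp [ubw])
  | and α β ihα ihβ =>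
    obtain ⟨α', e1, u1, s1, g1, f1⟩ := ihα
    obtain ⟨β', e2, u2, s2, g2, f2⟩ := ihβ
    rw [four_pow_two_mul] at s1 s2
    refine ⟨E.and α' β', ?_, ?_, ?_, ?_, ?_⟩
    · intro w; simp only [Sat]; rw [e1 w, e2 w]
    · simp [ubw, u1, u2]
    · rw [four_pow_two_mul]
      simp only [size]
      exact arith_bin _ _ _ _ (one_le_size α) (one_le_size β) s1 s2
    · intro ψ h
      simp only [sf, Finset.mem_insert, Finset.mem_union] at h ⊢
      rcases h with h | h | h
      · simp at h
      · exact Or.inr (Or.inl (g1 ψ h))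
      · exact Or.inr (Or.inr (g2 ψ h))
    · intro ψ h
      simp only [sf, Finset.mem_insert, Finset.mem_union] at h ⊢
      rcases h with h | h | h
      · simp at h
      · exact Or.inr (Or.inl (f1 ψ h))
      · exact Or.inr (Or.inr (f2 ψ h))
  | or α β ihα ihβ =>
    obtain ⟨α', e1, u1, s1, g1, f1⟩ := ihα
    obtain ⟨β', e2, u2, s2, g2, f2⟩ := ihβ
    rw [four_pow_two_mul] at s1 s2
    refine ⟨E.or α' β', ?_, ?_, ?_, ?_, ?_⟩
    · intro w; simp only [Sat]; rw [e1 w, e2 w]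
    · simp [ubw, u1, u2]
    · rw [four_pow_two_mul]
      simp only [size]
      exact arith_bin _ _ _ _ (one_le_size α) (one_le_size β) s1 s2
    · intro ψ h
      simp only [sf, Finset.mem_insert, Finset.mem_union] at h ⊢
      rcases h with h | h | h
      · simp at h
      · exact Or.inr (Or.inl (g1 ψ h))
      · exact Or.inr (Or.inr (g2 ψ h))
    · intro ψ h
      simp only [sf, Finset.mem_insert, Finset.mem_union] at h ⊢
      rcases h with h | h | h
      · simp at h
      · exact Or.inr (Or.inl (f1 ψ h))
      · exact Or.inr (Or.inr (f2 ψ h))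
  | next α ihα =>
    obtain ⟨α', e1, u1, s1, g1, f1⟩ := ihα
    rw [four_pow_two_mul] at s1
    refine ⟨E.next α', ?_, ?_, ?_, ?_, ?_⟩
    · intro w; simp only [Sat]; rw [e1 (suff w 1)]
    · simp [ubw, u1]
    · rw [four_pow_two_mul]
      simp only [size]
      exact arith_un _ _ s1
    · intro ψ h
      simp only [sf, Finset.mem_insert] at h ⊢
      rcases h with h | h
      · simp at h
      · exact Or.inr (g1 ψ h)
    · intro ψ h
      simp only [sf, Finset.mem_insert] at h ⊢
      rcases h with h | h
      · simp at h
      · exact Or.inr (f1 ψ h)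
  | untl α β ihα ihβ =>
    obtain ⟨α', e1, u1, s1, g1, f1⟩ := ihα
    obtain ⟨β', e2, u2, s2, g2, f2⟩ := ihβ
    rw [four_pow_two_mul] at s1 s2
    refine ⟨E.untl α' β', ?_, ?_, ?_, ?_, ?_⟩
    · intro w
      simp only [Sat]
      exact exists_congr fun k =>
        and_congr (e2 _) (forall_congr' fun j => imp_congr_right fun _ => e1 _)
    · simp [ubw, u1, u2]
    · rw [four_pow_two_mul]
      simp only [size]
      exact arith_bin _ _ _ _ (one_le_size α) (one_le_size β) s1 s2
    · intro ψ h
      simp only [sf, Finset.mem_insert, Finset.mem_union] at h ⊢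
      rcases h with h | h | h
      · simp at h
      · exact Or.inr (Or.inl (g1 ψ h))
      · exact Or.inr (Or.inr (g2 ψ h))
    · intro ψ h
      simp only [sf, Finset.mem_insert, Finset.mem_union] at h ⊢
      rcases h with h | h | h
      · simp at h
      · exact Or.inr (Or.inl (f1 ψ h))
      · exact Or.inr (Or.inr (f2 ψ h))
  | wuntl α β ihα ihβ =>
    obtain ⟨α', e1, u1, s1, g1, f1⟩ := ihα
    obtain ⟨β', e2, u2, s2, g2, f2⟩ := ihβ
    rw [four_pow_two_mul] at s1 s2
    refine ⟨E.or (E.untl α' β') (E.untl α' (orN (gDisjuncts α))), ?_, ?_, ?_, ?_, ?_⟩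
    · -- equivalence
      intro w
      simp only [Sat]
      have hU : (∃ k, Sat (suff w k) β ∧ ∀ j < k, Sat (suff w j) α) ↔
          (∃ k, Sat (suff w k) β' ∧ ∀ j < k, Sat (suff w j) α') :=
        exists_congr fun k =>
          and_congr (e2 _) (forall_congr' fun j => imp_congr_right fun _ => e1 _)
      have hG : (∀ k, Sat (suff w k) α) ↔
          (∃ k, Sat (suff w k) (orN (gDisjuncts α)) ∧ ∀ j < k, Sat (suff w j) α') :=
        (G_key α w).trans (exists_congr fun k =>
          and_congr Iff.rfl (forall_congr' fun j => imp_congr_right fun _ => e1 _))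
      rw [hG, hU]
      exact or_comm
    · -- 1-form
      simp [ubw, u1, u2, ubw_gDisjuncts]
    · -- size
      rw [four_pow_two_mul]
      have hg := size_gDisjuncts α
      have key := arith_w (size α) (size β) (size α') (size β')
        (one_le_size α) (one_le_size β) s1 s2
      simp only [size]
      omega
    · -- GF subformulas
      intro ψ h
      have hlim : isLimit (E.gf ψ) = true := by simp [isLimit]
      simp only [sf, Finset.mem_insert, Finset.mem_union] at h ⊢
      rcases h with h | (h | h | h) | (h | h | h)
      · simp at h
      · simp at h
      · exact Or.inr (Or.inl (g1 ψ h))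
      · exact Or.inr (Or.inr (g2 ψ h))
      · simp at h
      · exact Or.inr (Or.inl (g1 ψ h))
      · rcases limit_sf_gDisjuncts hlim α h with h' | ⟨q, hq, hq'⟩
        · exact Or.inr (Or.inl (gf_body_mem h'))
        · cases hq
          exact Or.inr (Or.inl hq')
    · -- FG subformulas
      intro ψ h
      have hlim : isLimit (E.fg ψ) = true := by simp [isLimit]
      simp only [sf, Finset.mem_insert, Finset.mem_union] at h ⊢
      rcases h with h | (h | h | h) | (h | h | h)
      · simp at h
      · simp at h
      · exact Or.inr (Or.inl (f1 ψ h))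
      · exact Or.inr (Or.inr (f2 ψ h))
      · simp at h
      · exact Or.inr (Or.inl (f1 ψ h))
      · rcases limit_sf_gDisjuncts hlim α h with h' | ⟨q, hq, _⟩
        · exact Or.inr (Or.inl h')
        · simp at hq

end ExtLTL
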